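/- Let m ≥ 1 be an integer and set p_m = 2·log((2m+1)/(2m)) / log((m+1)/m) and F_m(x) = x · (m/(x − m))^{p_m/2} for x > m. Then for every integer k > m one has F_m(k) ≥ 2m, and equality holds for k = 2m and k = 2m + 1; that is, the minimum of F_m over integers greater than m equals 2m. -/

import Mathlib

set_option maxHeartbeats 1600000

/-- For `m ≥ 1`, `p_m = 2 log((2m+1)/(2m)) / log((m+1)/m)` and
`F_m(x) = x (m/(x-m))^{p_m/2}`, one has `F_m(k) ≥ 2m` for every integer `k > m`,
with equality for `k = 2m` and `k = 2m + 1`; i.e. the minimum of `F_m` over the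
integers greater than `m` equals `2m`. -/
theorem Fm_min_over_integers (m : ℕ) (hm : 1 ≤ m)
    (pm : ℝ)
    (hpm : pm = 2 * Real.log ((2 * (m : ℝ) + 1) / (2 * (m : ℝ))) /
        Real.log (((m : ℝ) + 1) / (m : ℝ)))
    (F : ℝ → ℝ) (hF : ∀ x : ℝ, F x = x * ((m : ℝ) / (x - (m : ℝ))) ^ (pm / 2)) :
    (∀ k : ℕ, m < k → 2 * (m : ℝ) ≤ F (k : ℝ)) ∧
      F (2 * (m : ℝ)) = 2 * (m : ℝ) ∧ F (2 * (m : ℝ) + 1) = 2 * (m : ℝ) := by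
  set M : ℝ := (m : ℝ) with hMdef
  have hM1 : (1:ℝ) ≤ M := by rw [hMdef]; exact_mod_cast hm
  have hM0 : (0:ℝ) < M := lt_of_lt_of_le one_pos hM1
  set q : ℝ := pm / 2 with hq
  set la : ℝ := Real.log M with hla
  set lb : ℝ := Real.log (M + 1) with hlb
  set lc : ℝ := Real.log (2 * M + 1) with hlc
  set l2 : ℝ := Real.log 2 with hl2
  have hMne : M ≠ 0 := hM0.ne'
  have hM1pos : (0:ℝ) < M + 1 := by linarith
  have h2Mpos : (0:ℝ) < 2 * M := by linarith
  have h2M1pos : (0:ℝ) < 2 * M + 1 := by linarith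
  have hL1 : Real.log ((M + 1) / M) = lb - la := by
    rw [Real.log_div hM1pos.ne' hMne]
  have hlog2M : Real.log (2 * M) = l2 + la := by
    rw [Real.log_mul two_ne_zero hMne]
  have hL2 : Real.log ((2 * M + 1) / (2 * M)) = lc - (l2 + la) := by
    rw [Real.log_div h2M1pos.ne' h2Mpos.ne', hlog2M]
  have hL1pos : 0 < lb - la := by
    rw [← hL1]
    exact Real.log_pos (by rw [lt_div_iff₀ hM0]; linarith)
  have hL2pos : 0 < lc - (l2 + la) := by
    rw [← hL2]
    exact Real.log_pos (by rw [lt_div_iff₀ h2Mpos]; linarith)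
  have hqL1 : q * (lb - la) = lc - (l2 + la) := by
    rw [hq, hpm, hL1, hL2]
    field_simp
  have hq0 : 0 < q := by
    by_contra h
    push_neg at h
    nlinarith [mul_nonneg (neg_nonneg.mpr h) hL1pos.le]
  have hq_half : 1 / 2 ≤ q := by
    have key : lb - la ≤ 2 * (lc - (l2 + la)) := by
      have h1 : (M + 1) / M ≤ ((2 * M + 1) / (2 * M)) ^ (2:ℕ) := by
        rw [div_pow, div_le_div_iff₀ hM0 (by positivity)]
        nlinarith
      have h2 := (Real.log_le_log_iff (by positivity) (by positivity)).mpr h1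
      rwa [Real.log_pow, hL1, hL2, Nat.cast_ofNat] at h2
    nlinarith [hqL1, hL1pos]
  have hq_upper : q * (2 * M + 1) ≤ M + 1 := by
    have hp1 : (1:ℝ) ≤ (M + 1) / M := by rw [le_div_iff₀ hM0]; linarith
    have hs1 : (-1:ℝ) ≤ 1 / (2 * M + 1) := by
      have : (0:ℝ) ≤ 1 / (2 * M + 1) := by positivity
      linarith
    have hber := one_add_mul_self_le_rpow_one_add hs1 hp1
    have e1 : (1:ℝ) + 1 / (2 * M + 1) = (2 * M + 2) / (2 * M + 1) := by
      field_simp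
      ring
    have e2 : (2 * M + 1) / (2 * M) ≤ 1 + (M + 1) / M * (1 / (2 * M + 1)) := by
      rw [show (1:ℝ) + (M + 1) / M * (1 / (2 * M + 1))
          = (M * (2 * M + 1) + (M + 1)) / (M * (2 * M + 1)) by field_simp,
        div_le_div_iff₀ h2Mpos (by positivity)]
      nlinarith
    have hstep : (2 * M + 1) / (2 * M) ≤ ((2 * M + 2) / (2 * M + 1)) ^ ((M + 1) / M) := by
      rw [← e1]
      exact le_trans e2 hber
    have hlogstep := (Real.log_le_log_iff (by positivity)
      (Real.rpow_pos_of_pos (by positivity) _)).mpr hstep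
    rw [Real.log_rpow (by positivity), hL2] at hlogstep
    have hlq : Real.log ((2 * M + 2) / (2 * M + 1)) = l2 + lb - lc := by
      rw [show (2:ℝ) * M + 2 = 2 * (M + 1) by ring,
        Real.log_div (by positivity) h2M1pos.ne',
        Real.log_mul two_ne_zero hM1pos.ne']
    rw [hlq] at hlogstep
    -- hlogstep : lc - (l2 + la) ≤ (M+1)/M * (l2 + lb - lc)
    have h7 : M * (lc - (l2 + la)) ≤ (M + 1) * (l2 + lb - lc) := by
      have h8 := mul_le_mul_of_nonneg_left hlogstep hM0.le
      have h9 : M * ((M + 1) / M * (l2 + lb - lc)) = (M + 1) * (l2 + lb - lc) := by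
        field_simp
      rw [h9] at h8
      linarith
    have hfin : (2 * M + 1) * (lc - (l2 + la)) ≤ (M + 1) * (lb - la) := by linarith
    have hqL1' : (2 * M + 1) * (q * (lb - la)) = (2 * M + 1) * (lc - (l2 + la)) := by
      rw [hqL1]
    by_contra hcon
    push_neg at hcon
    have hmul := mul_lt_mul_of_pos_right hcon hL1pos
    nlinarith [hqL1', hfin, hmul]
  refine ⟨?_, ?_, ?_⟩
  · intro k hk
    set x : ℝ := (k : ℝ) with hxdef
    have hxk : M + 1 ≤ x := by
      rw [hxdef, hMdef]
      exact_mod_cast Nat.succ_le_of_lt hk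
    have hxM : M < x := by linarith
    have hxpos : (0:ℝ) < x := by linarith
    have hxmM : (0:ℝ) < x - M := by linarith
    have hbase : (0:ℝ) < M / (x - M) := by positivity
    have hFx : F x = x * (M / (x - M)) ^ q := hF x
    have hFpos : 0 < F x := by rw [hFx]; positivity
    set lx : ℝ := Real.log x with hlx
    set ly : ℝ := Real.log (x - M) with hly
    have hlogF : Real.log (F x) = lx + q * (la - ly) := by
      rw [hFx, Real.log_mul hxpos.ne' (Real.rpow_pos_of_pos hbase q).ne',
        Real.log_rpow hbase, Real.log_div hMne hxmM.ne']
    have hkey : l2 + la ≤ lx + q * (la - ly) := by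
      rcases le_or_gt k (2 * m) with hcase | hcase
      · have hx2M : x ≤ 2 * M := by
          rw [hxdef, hMdef]
          exact_mod_cast hcase
        have hc : ly ≤ la := by
          rw [hly, hla]
          exact (Real.log_le_log_iff hxmM hM0).mpr (by linarith)
        have hsq : ly - la ≤ 2 * (lx - (l2 + la)) := by
          have h1 : (x - M) / M ≤ (x / (2 * M)) ^ (2:ℕ) := by
            rw [div_pow, div_le_div_iff₀ hM0 (by positivity)]
            nlinarith [mul_nonneg (sq_nonneg (x - 2 * M)) hM0.le]
          have h2 := (Real.log_le_log_iff (by positivity) (by positivity)).mpr h1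
          rwa [Real.log_pow, Real.log_div hxmM.ne' hMne, Real.log_div hxpos.ne' h2Mpos.ne',
            hlog2M, Nat.cast_ofNat] at h2
        have h3 : q * (ly - la) ≤ (1 / 2) * (ly - la) := by
          nlinarith [mul_nonneg (by linarith : (0:ℝ) ≤ q - 1 / 2) (by linarith : (0:ℝ) ≤ la - ly)]
        linarith
      · have hx2M1 : 2 * M + 1 ≤ x := by
          rw [hxdef, hMdef]
          have h : 2 * m + 1 ≤ k := hcase
          exact_mod_cast h
        have hp1 : (1:ℝ) ≤ (2 * M + 1) / (M + 1) := by
          rw [le_div_iff₀ hM1pos]; linarith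
        have hs1 : (-1:ℝ) ≤ (x - (2 * M + 1)) / (2 * M + 1) := by
          have : (0:ℝ) ≤ (x - (2 * M + 1)) / (2 * M + 1) :=
            div_nonneg (by linarith) (by linarith)
          linarith
        have hber := one_add_mul_self_le_rpow_one_add hs1 hp1
        have e1 : (1:ℝ) + (x - (2 * M + 1)) / (2 * M + 1) = x / (2 * M + 1) := by
          field_simp
          ring
        have e2 : (1:ℝ) + (2 * M + 1) / (M + 1) * ((x - (2 * M + 1)) / (2 * M + 1))
            = (x - M) / (M + 1) := by
          field_simp
          ring
        rw [e1, e2] at hber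
        have hlogber := (Real.log_le_log_iff (by positivity)
          (Real.rpow_pos_of_pos (by positivity) _)).mpr hber
        rw [Real.log_rpow (by positivity), Real.log_div hxmM.ne' hM1pos.ne',
          Real.log_div hxpos.ne' h2M1pos.ne'] at hlogber
        -- hlogber : ly - lb ≤ (2M+1)/(M+1) * (lx - lc)
        have hlk0 : (0:ℝ) ≤ lx - lc := by
          have h := (Real.log_le_log_iff h2M1pos hxpos).mpr hx2M1
          rw [← hlx, ← hlc] at h
          linarith
        have h4 : q * (ly - lb) ≤ lx - lc := by
          have h5 : q * (ly - lb) ≤ q * ((2 * M + 1) / (M + 1) * (lx - lc)) :=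
            mul_le_mul_of_nonneg_left hlogber hq0.le
          have heq : q * ((2 * M + 1) / (M + 1) * (lx - lc))
              = q * (2 * M + 1) * (lx - lc) / (M + 1) := by ring
          have h6 : q * (2 * M + 1) * (lx - lc) / (M + 1) ≤ lx - lc := by
            rw [div_le_iff₀ hM1pos]
            nlinarith [mul_le_mul_of_nonneg_right hq_upper hlk0]
          rw [heq] at h5
          linarith
        linarith [hqL1]
    have hle : Real.log (2 * M) ≤ Real.log (F x) := by
      rw [hlogF, hlog2M]; exact hkey
    calc 2 * M = Real.exp (Real.log (2 * M)) := (Real.exp_log h2Mpos).symm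
      _ ≤ Real.exp (Real.log (F x)) := Real.exp_le_exp.mpr hle
      _ = F x := Real.exp_log hFpos
  · rw [hF]
    rw [show 2 * M - M = M by ring, div_self hMne, Real.one_rpow, mul_one]
  · rw [hF]
    rw [show 2 * M + 1 - M = M + 1 by ring]
    have h2 : (M / (M + 1)) ^ q = 2 * M / (2 * M + 1) := by
      rw [Real.rpow_def_of_pos (by positivity)]
      rw [show Real.log (M / (M + 1)) * q = -(q * (lb - la)) by
        rw [Real.log_div hMne hM1pos.ne']; ring]
      rw [hqL1]
      rw [show -(lc - (l2 + la)) = Real.log (2 * M / (2 * M + 1)) by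
        rw [Real.log_div h2Mpos.ne' h2M1pos.ne', hlog2M]; ring]
      rw [Real.exp_log (by positivity)]
    rw [h2]
    field_simp
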